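/- Let $\psi > 0$, $d > 0$, and let $\hat{v}^+ \geq 0$ be the unique nonnegative fixed point of $f(v) = \psi\sqrt{d}\sqrt{1+v} - (1+v)$ with both paths symmetric ($\psi_1 = \psi_2 = \psi$). Then for all $v \geq 0$: $f(f(v)) \leq v$ if and only if $v \geq \hat{v}^+$ (whenever $f(v) \geq -1$ so the composition is defined). -/
import Mathlib


/-- Monotone composition property of the symmetric two-path best-response
map: the twice-iterated best response maps a valuation below itself iff the
valuation is at least the equilibrium value. -/
theorem best_response_composition_monotone
    (ψ d : ℝ) (hψ : 0 < ψ) (hd : 0 < d)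
    (f : ℝ → ℝ)
    (hf : ∀ v, f v = ψ * Real.sqrt d * Real.sqrt (1 + v) - (1 + v))
    (vPlus : ℝ) (hvPlus : 0 ≤ vPlus) (hfix : f vPlus = vPlus)
    (huniq : ∀ v : ℝ, 0 ≤ v → f v = v → v = vPlus) :
    ∀ v : ℝ, 0 ≤ v → -1 ≤ f v → (f (f v) ≤ v ↔ vPlus ≤ v) := by
  intro v hv hfv
  set c : ℝ := ψ * Real.sqrt d with hc
  have hcpos : 0 < c := mul_pos hψ (Real.sqrt_pos.mpr hd)
  have h1v : (0:ℝ) ≤ 1 + v := by linarith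
  have h1p : (0:ℝ) ≤ 1 + vPlus := by linarith
  have hsv : Real.sqrt (1 + v) * Real.sqrt (1 + v) = 1 + v :=
    Real.mul_self_sqrt h1v
  have hsp : Real.sqrt (1 + vPlus) * Real.sqrt (1 + vPlus) = 1 + vPlus :=
    Real.mul_self_sqrt h1p
  have svnn : 0 ≤ Real.sqrt (1 + v) := Real.sqrt_nonneg _
  have spnn : 0 ≤ Real.sqrt (1 + vPlus) := Real.sqrt_nonneg _
  have hfixe : c * Real.sqrt (1 + vPlus) = 1 + 2 * vPlus := by
    have h := hfix
    rw [hf vPlus] at h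
    linarith
  have hfveq : f v = c * Real.sqrt (1 + v) - (1 + v) := hf v
  -- Step 1: f (f v) ≤ v ↔ f v ≤ v
  have hstep1 : f (f v) ≤ v ↔ f v ≤ v := by
    have hfv1 : 0 ≤ 1 + f v := by linarith
    have hsum : 1 + v + f v = c * Real.sqrt (1 + v) := by
      rw [hfveq]; ring
    rw [hf (f v)]
    constructor
    · intro h
      have h2 : c * Real.sqrt (1 + f v) ≤ c * Real.sqrt (1 + v) := by linarith
      have h3 : Real.sqrt (1 + f v) ≤ Real.sqrt (1 + v) :=
        le_of_mul_le_mul_left h2 hcpos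
      have h4 : 1 + f v ≤ 1 + v := by
        nlinarith [Real.mul_self_sqrt hfv1, Real.sqrt_nonneg (1 + f v),
          mul_le_mul h3 h3 (Real.sqrt_nonneg _) svnn]
      linarith
    · intro h
      have h4 : 1 + f v ≤ 1 + v := by linarith
      have h3 : Real.sqrt (1 + f v) ≤ Real.sqrt (1 + v) :=
        Real.sqrt_le_sqrt h4
      have h2 : c * Real.sqrt (1 + f v) ≤ c * Real.sqrt (1 + v) := by
        exact mul_le_mul_of_nonneg_left h3 hcpos.le
      linarith
  rw [hstep1, hfveq]
  -- Step 2: f v ≤ v ↔ vPlus ≤ v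
  constructor
  · intro h
    -- contrapositive: v < vPlus gives c√(1+v) > 1+2v
    by_contra hlt
    push_neg at hlt
    have hslt : Real.sqrt (1 + v) < Real.sqrt (1 + vPlus) :=
      Real.sqrt_lt_sqrt h1v (by linarith)
    have hspos : 0 < Real.sqrt (1 + vPlus) := lt_of_le_of_lt svnn hslt
    nlinarith [mul_pos (sub_pos.mpr hslt)
        (by nlinarith : (0:ℝ) < 2 * Real.sqrt (1 + vPlus) * Real.sqrt (1 + v) + 1),
      mul_pos hcpos hspos]
  · intro h
    have hsle : Real.sqrt (1 + vPlus) ≤ Real.sqrt (1 + v) :=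
      Real.sqrt_le_sqrt (by linarith)
    have hspos : (0:ℝ) < Real.sqrt (1 + vPlus) := by nlinarith
    nlinarith [mul_nonneg (sub_nonneg.mpr hsle)
        (by nlinarith : (0:ℝ) ≤ 2 * Real.sqrt (1 + vPlus) * Real.sqrt (1 + v) + 1)]
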